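/- Let K be a field and A = K[s,t,x,y]/(sx^2+txy+sy^2). Then A is an integral domain, and the set ⋃_{n∈ℕ} Ass_A A/(x^n,y^n)A, the union over all positive integers n of the sets of associated primes of the A-modules A/(x^n,y^n)A, is infinite. -/

import Mathlib

set_option synthInstance.maxHeartbeats 1000000
set_option maxHeartbeats 1000000

open MvPolynomial

/-- The polynomial `sx² + txy + sy²` in `K[s,t,x,y]`, with `s = X 0`, `t = X 1`, `x = X 2`,
`y = X 3`. -/
noncomputable def sQuad (K : Type) [Field K] : MvPolynomial (Fin 4) K :=
  X 0 * X 2 ^ 2 + X 1 * X 2 * X 3 + X 0 * X 3 ^ 2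

/-- The hypersurface `A = K[s,t,x,y]/(sx² + txy + sy²)`. -/
abbrev Aring (K : Type) [Field K] : Type :=
  MvPolynomial (Fin 4) K ⧸ Ideal.span {sQuad K}

/-- The quotient map `K[s,t,x,y] → A`. -/
noncomputable def π (K : Type) [Field K] : MvPolynomial (Fin 4) K →+* Aring K :=
  Ideal.Quotient.mk _

namespace Stmt14

variable (K : Type) [Field K]

lemma prime_X_fin {m : ℕ} (i : Fin (m + 1)) :
    Prime (X i : MvPolynomial (Fin (m + 1)) K) := by
  rw [← MulEquiv.prime_iff (renameEquiv K (Equiv.swap i 0)).toMulEquiv]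
  have h1 : (renameEquiv K (Equiv.swap i 0)).toMulEquiv (X i)
      = (X 0 : MvPolynomial (Fin (m + 1)) K) := by
    show (renameEquiv K (Equiv.swap i 0)) (X i) = X 0
    simp [renameEquiv_apply, rename_X]
  rw [h1, ← MulEquiv.prime_iff (finSuccEquiv K m).toMulEquiv]
  have h2 : (finSuccEquiv K m).toMulEquiv (X 0) = Polynomial.X := by
    show (finSuccEquiv K m) (X 0) = Polynomial.X
    exact finSuccEquiv_X_zero
  rw [h2]
  exact Polynomial.prime_X

/-! ### The Chebyshev-like polynomials -/

noncomputable def Dch : ℕ → MvPolynomial (Fin 2) K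
  | 0 => 1
  | 1 => X 1
  | (n + 2) => X 1 * Dch (n + 1) - X 0 ^ 2 * Dch n

noncomputable def phD : MvPolynomial (Fin 2) K →ₐ[K] Polynomial K :=
  aeval ![0, Polynomial.X]

lemma phD_D : ∀ l, phD K (Dch K l) = Polynomial.X ^ l := by
  have key : ∀ l, phD K (Dch K l) = Polynomial.X ^ l ∧
      phD K (Dch K (l + 1)) = Polynomial.X ^ (l + 1) := by
    intro l
    induction l with
    | zero => constructor <;> simp [Dch, phD]
    | succ n ih =>
      refine ⟨ih.2, ?_⟩
      show phD K (Dch K (n + 2)) = _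
      rw [Dch, map_sub, map_mul, map_mul, map_pow, ih.1, ih.2]
      simp [phD]
      ring
  exact fun l => (key l).1

lemma Dch_ne_zero (l : ℕ) : Dch K l ≠ 0 := by
  intro h
  have := phD_D K l
  rw [h, map_zero] at this
  exact pow_ne_zero l Polynomial.X_ne_zero this.symm

lemma Dch_not_unit {l : ℕ} (hl : l ≠ 0) : ¬IsUnit (Dch K l) := by
  intro h
  have : IsUnit (Polynomial.X ^ l : Polynomial K) := by
    rw [← phD_D K l]; exact h.map _
  exact Polynomial.not_isUnit_X ((isUnit_pow_iff hl).mp this)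

lemma X0_not_dvd_Dch (l : ℕ) : ¬ ((X 0 : MvPolynomial (Fin 2) K) ∣ Dch K l) := by
  rintro ⟨c, hc⟩
  have := phD_D K l
  rw [hc, map_mul] at this
  have h0 : phD K (X 0) = 0 := by simp [phD]
  rw [h0, zero_mul] at this
  exact pow_ne_zero l Polynomial.X_ne_zero this.symm

lemma Dch_add : ∀ n m, Dch K (m + n + 2) =
    Dch K (n + 1) * Dch K (m + 1) - X 0 ^ 2 * (Dch K n * Dch K m) := by
  intro n
  induction n with
  | zero =>
    intro m
    show Dch K (m + 2) = _
    rw [Dch]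
    simp [Dch]
  | succ n ih =>
    intro m
    have h : m + (n + 1) + 2 = (m + 1) + n + 2 := by omega
    rw [h, ih (m + 1)]
    rw [show Dch K (m + 1 + 1) = Dch K (m + 2) from rfl,
        show Dch K (m + 2) = X 1 * Dch K (m + 1) - X 0 ^ 2 * Dch K m from by rw [Dch],
        show Dch K (n + 1 + 1) = X 1 * Dch K (n + 1) - X 0 ^ 2 * Dch K n from by rw [Dch]]
    ring

lemma Dch_consec {p : MvPolynomial (Fin 2) K} (hp : Prime p) :
    ∀ l, p ∣ Dch K l → p ∣ Dch K (l + 1) → False := by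
  intro l
  induction l with
  | zero =>
    intro h _
    exact hp.not_unit (isUnit_of_dvd_one h)
  | succ l ih =>
    intro h1 h2
    have hD : Dch K (l + 2) = X 1 * Dch K (l + 1) - X 0 ^ 2 * Dch K l := by rw [Dch]
    have h3 : p ∣ X 0 ^ 2 * Dch K l := by
      have : X 0 ^ 2 * Dch K l = X 1 * Dch K (l + 1) - Dch K (l + 2) := by
        rw [hD]; ring
      rw [this]
      exact dvd_sub (h1.mul_left _) h2
    rcases hp.dvd_mul.mp h3 with h4 | h4
    · have h5 : p ∣ X 0 := hp.dvd_of_dvd_pow h4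
      have h6 : Associated p (X 0) := hp.associated_of_dvd (prime_X_fin K 0) h5
      exact X0_not_dvd_Dch K (l + 1) (h6.symm.dvd.trans h1)
    · exact ih h4 h1

lemma Dch_gcd {p : MvPolynomial (Fin 2) K} (hp : Prime p) :
    ∀ N a b, a + b ≤ N → p ∣ Dch K a → p ∣ Dch K b →
      p ∣ Dch K (Nat.gcd (a + 1) (b + 1) - 1) := by
  intro N
  induction N with
  | zero =>
    intro a b hab ha _
    have h0 : a = 0 := by omega
    have h1 : b = 0 := by omega
    subst h0; subst h1
    simpa using ha
  | succ N ih =>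
    have key : ∀ a c, a + (a + c + 1) ≤ N + 1 → p ∣ Dch K a → p ∣ Dch K (a + c + 1) →
        p ∣ Dch K (Nat.gcd (a + 1) ((a + c + 1) + 1) - 1) := by
      intro a c hab ha hb
      have hc : p ∣ Dch K c := by
        rcases c with _ | c'
        · exact absurd hb (fun hb' => Dch_consec K hp a ha (by simpa using hb'))
        · have heq := Dch_add K c' a
          have h2 : p ∣ Dch K (c' + 1) * Dch K (a + 1) := by
            have h3 : Dch K (c' + 1) * Dch K (a + 1)
                = Dch K (a + c' + 2) + X 0 ^ 2 * (Dch K c' * Dch K a) := by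
              rw [heq]; ring
            rw [h3]
            exact dvd_add (by simpa [show a + (c' + 1) + 1 = a + c' + 2 from by omega] using hb)
              ((ha.mul_left _).mul_left _)
          rcases hp.dvd_mul.mp h2 with h4 | h4
          · exact h4
          · exact absurd h4 (fun h4' => Dch_consec K hp a ha h4')
      have hgcd : Nat.gcd (a + 1) ((a + c + 1) + 1) = Nat.gcd (a + 1) (c + 1) := by
        have : (a + c + 1) + 1 = (c + 1) + (a + 1) := by omega
        rw [this, Nat.gcd_add_self_right]
      rw [hgcd]
      exact ih a c (by omega) ha hc
    intro a b hab ha hb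
    rcases lt_trichotomy a b with h | h | h
    · obtain ⟨c, rfl⟩ := Nat.exists_eq_add_of_lt h
      exact key a c hab ha hb
    · subst h
      simpa [Nat.gcd_self] using ha
    · obtain ⟨c, rfl⟩ := Nat.exists_eq_add_of_lt h
      rw [Nat.gcd_comm]
      exact key b c (by omega) hb ha

/-! ### `sQuad` is prime -/

lemma prime_linear {S : Type*} [CommRing S] [IsDomain S] [UniqueFactorizationMonoid S]
    {a b : S} (ha : a ≠ 0)
    (hco : ∀ d : S, d ∣ a → d ∣ b → IsUnit d) :
    Prime (Polynomial.C a * Polynomial.X + Polynomial.C b) := by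
  rw [← UniqueFactorizationMonoid.irreducible_iff_prime]
  constructor
  · intro hu
    have hdeg := Polynomial.degree_linear (b := b) ha
    rw [Polynomial.degree_eq_zero_of_isUnit hu] at hdeg
    norm_num at hdeg
  · intro f g hfg
    have hne : Polynomial.C a * Polynomial.X + Polynomial.C b ≠ 0 := by
      intro h
      have := Polynomial.degree_linear (b := b) ha
      rw [h] at this
      simp at this
    have hf0 : f ≠ 0 := by rintro rfl; rw [zero_mul] at hfg; exact hne hfg
    have hg0 : g ≠ 0 := by rintro rfl; rw [mul_zero] at hfg; exact hne hfg
    have hnd : f.natDegree + g.natDegree = 1 := by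
      rw [← Polynomial.natDegree_mul hf0 hg0, ← hfg, Polynomial.natDegree_linear ha]
    have hcase : f.natDegree = 0 ∨ g.natDegree = 0 := by omega
    rcases hcase with h | h
    · left
      obtain ⟨c, rfl⟩ := Polynomial.natDegree_eq_zero.mp h
      have h1 : c * g.coeff 1 = a := by
        have := congrArg (fun q => Polynomial.coeff q 1) hfg
        simpa [Polynomial.coeff_C_mul, Polynomial.coeff_X_one] using this.symm
      have h0 : c * g.coeff 0 = b := by
        have := congrArg (fun q => Polynomial.coeff q 0) hfg
        simpa [Polynomial.coeff_C_mul] using this.symm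
      exact Polynomial.isUnit_C.mpr (hco c ⟨g.coeff 1, h1.symm⟩ ⟨g.coeff 0, h0.symm⟩)
    · right
      obtain ⟨c, rfl⟩ := Polynomial.natDegree_eq_zero.mp h
      have h1 : c * f.coeff 1 = a := by
        have := congrArg (fun q => Polynomial.coeff q 1) hfg
        simp only [Polynomial.coeff_mul_C, Polynomial.coeff_add, Polynomial.coeff_C_mul,
          Polynomial.coeff_X_one, mul_one, Polynomial.coeff_C, if_neg (by norm_num : ¬(1:ℕ) = 0),
          add_zero] at this
        rw [mul_comm]; exact this.symm
      have h0 : c * f.coeff 0 = b := by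
        have := congrArg (fun q => Polynomial.coeff q 0) hfg
        simp only [Polynomial.coeff_mul_C, Polynomial.coeff_add, Polynomial.coeff_C_mul,
          Polynomial.coeff_X_zero, mul_zero, Polynomial.coeff_C, if_pos rfl, zero_add] at this
        rw [mul_comm]; exact this.symm
      exact Polynomial.isUnit_C.mpr (hco c ⟨f.coeff 1, h1.symm⟩ ⟨f.coeff 0, h0.symm⟩)

set_option linter.unreachableTactic false in
set_option linter.unusedTactic false in
lemma prime_sQuad : Prime (sQuad K) := by
  rw [← MulEquiv.prime_iff (finSuccEquiv K 3).toMulEquiv]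
  have h1 : ((1 : Fin 4)) = Fin.succ (0 : Fin 3) := rfl
  have h2 : ((2 : Fin 4)) = Fin.succ (1 : Fin 3) := rfl
  have h3 : ((3 : Fin 4)) = Fin.succ (2 : Fin 3) := rfl
  have he : (finSuccEquiv K 3).toMulEquiv (sQuad K)
      = Polynomial.C (X 1 ^ 2 + X 2 ^ 2) * Polynomial.X
        + Polynomial.C (X 0 * X 1 * X 2 : MvPolynomial (Fin 3) K) := by
    show (finSuccEquiv K 3) (sQuad K) = _
    rw [sQuad, h1, h2, h3]
    simp only [map_add, map_mul, map_pow, finSuccEquiv_X_zero, finSuccEquiv_X_succ]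
    ring
  rw [he]
  set S := MvPolynomial (Fin 3) K
  apply prime_linear
  · intro h
    have := congrArg (aeval (R := K) ![(Polynomial.X : Polynomial K), Polynomial.X,
      Polynomial.X ^ 2]) h
    simp only [map_add, map_pow, aeval_X, map_zero] at this
    simp at this
    all_goals (have h4 := congrArg (fun q => Polynomial.coeff q 4) this; simp [← pow_mul, Polynomial.coeff_X_pow] at h4)
  · intro d hda hdb
    by_contra hu
    have hd0 : d ≠ 0 := by
      rintro rfl
      obtain ⟨c, hc⟩ := hdb
      rw [zero_mul] at hc
      have := congrArg (aeval (R := K) ![(Polynomial.X : Polynomial K), Polynomial.X,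
        Polynomial.X ^ 2]) hc
      simp only [map_mul, aeval_X, map_zero] at this
      simp at this
      all_goals (have h4 := congrArg (fun q => Polynomial.coeff q 4) this; simp [← pow_mul, Polynomial.coeff_X_pow] at h4)
    obtain ⟨q, hqirr, hqd⟩ := WfDvdMonoid.exists_irreducible_factor hu hd0
    have hq : Prime q := UniqueFactorizationMonoid.irreducible_iff_prime.mp hqirr
    have hqb : q ∣ X 0 * X 1 * X 2 := hqd.trans hdb
    have hqa : q ∣ (X 1 ^ 2 + X 2 ^ 2 : S) := hqd.trans hda
    have hX : (X 0 : S) ∣ (X 1 ^ 2 + X 2 ^ 2 : S) ∨ (X 1 : S) ∣ (X 1 ^ 2 + X 2 ^ 2 : S)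
        ∨ (X 2 : S) ∣ (X 1 ^ 2 + X 2 ^ 2 : S) := by
      rcases (hq.dvd_mul.mp hqb) with h | h
      · rcases hq.dvd_mul.mp h with h2 | h2
        · exact Or.inl (((hq.associated_of_dvd (prime_X_fin K 0) h2).symm.dvd).trans hqa)
        · exact Or.inr (Or.inl (((hq.associated_of_dvd (prime_X_fin K 1) h2).symm.dvd).trans hqa))
      · exact Or.inr (Or.inr (((hq.associated_of_dvd (prime_X_fin K 2) h).symm.dvd).trans hqa))
    rcases hX with ⟨c, hc⟩ | ⟨c, hc⟩ | ⟨c, hc⟩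
    · have := congrArg (aeval (R := K) ![(0 : Polynomial K), Polynomial.X,
        Polynomial.X ^ 2]) hc
      simp only [map_add, map_mul, map_pow, aeval_X] at this
      simp at this
      all_goals (have h4 := congrArg (fun q => Polynomial.coeff q 4) this; simp [← pow_mul, Polynomial.coeff_X_pow] at h4)
    · have := congrArg (aeval (R := K) ![(Polynomial.X : Polynomial K), 0,
        Polynomial.X ^ 2]) hc
      simp only [map_add, map_mul, map_pow, aeval_X] at this
      simp at this
      all_goals (have h4 := congrArg (fun q => Polynomial.coeff q 4) this; simp [← pow_mul, Polynomial.coeff_X_pow] at h4)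
    · have := congrArg (aeval (R := K) ![(Polynomial.X : Polynomial K), Polynomial.X ^ 2,
        0]) hc
      simp only [map_add, map_mul, map_pow, aeval_X] at this
      simp at this
      all_goals (have h4 := congrArg (fun q => Polynomial.coeff q 4) this; simp [← pow_mul, Polynomial.coeff_X_pow] at h4)

end Stmt14

namespace Stmt14

variable (K : Type) [Field K]

/-! ### maps between polynomial rings -/

noncomputable def ι : MvPolynomial (Fin 2) K →ₐ[K] MvPolynomial (Fin 4) K :=
  rename (Fin.castLE (by norm_num))

noncomputable def ev : MvPolynomial (Fin 4) K →ₐ[K] MvPolynomial (Fin 2) K :=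
  aeval ![X 0, X 1, 0, 0]

lemma iota_X0 : ι K (X 0) = X 0 := by
  rw [ι, rename_X]; rfl

lemma iota_X1 : ι K (X 1) = X 1 := by
  rw [ι, rename_X]; rfl

lemma ev_iota (g : MvPolynomial (Fin 2) K) : ev K (ι K g) = g := by
  rw [ι, ev]
  show (aeval ![X 0, X 1, 0, 0]) ((rename (Fin.castLE (by norm_num))) g) = g
  rw [aeval_rename]
  have h : (![X 0, X 1, 0, 0] ∘ Fin.castLE (by norm_num : 2 ≤ 4))
      = (X : Fin 2 → MvPolynomial (Fin 2) K) := by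
    funext i
    fin_cases i <;> rfl
  rw [h, aeval_X_left_apply]

lemma ev_sQuad : ev K (sQuad K) = 0 := by
  rw [sQuad, ev]
  simp

/-! ### Key identity 1 -/

noncomputable def Acf : ℕ → MvPolynomial (Fin 4) K
  | 0 => 0
  | 1 => X 0
  | (k + 2) => X 1 * X 2 * Acf (k + 1) - X 0 ^ 2 * X 2 ^ 2 * Acf k
      + (-1 : MvPolynomial (Fin 4) K) ^ (k + 1) * X 0 ^ (k + 2) * X 3 ^ (k + 1)

noncomputable def Bcf : ℕ → MvPolynomial (Fin 4) K
  | 0 => 0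
  | 1 => -(X 0 ^ 2)
  | (k + 2) => X 1 * Bcf (k + 1) - X 0 ^ 2 * Bcf k

lemma ID1 : ∀ k, ι K (Dch K k) * (X 0 * X 2 ^ k * X 3) =
    Acf K k * sQuad K + Bcf K k * X 2 ^ (k + 1)
      + (-1 : MvPolynomial (Fin 4) K) ^ k * X 0 ^ (k + 1) * X 3 ^ (k + 1) := by
  have key : ∀ k, (ι K (Dch K k) * (X 0 * X 2 ^ k * X 3) =
      Acf K k * sQuad K + Bcf K k * X 2 ^ (k + 1)
        + (-1 : MvPolynomial (Fin 4) K) ^ k * X 0 ^ (k + 1) * X 3 ^ (k + 1)) ∧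
      (ι K (Dch K (k + 1)) * (X 0 * X 2 ^ (k + 1) * X 3) =
      Acf K (k + 1) * sQuad K + Bcf K (k + 1) * X 2 ^ (k + 2)
        + (-1 : MvPolynomial (Fin 4) K) ^ (k + 1) * X 0 ^ (k + 2) * X 3 ^ (k + 2)) := by
    intro k
    induction k with
    | zero =>
      constructor
      · show ι K (Dch K 0) * _ = Acf K 0 * _ + Bcf K 0 * _ + _
        rw [show Dch K 0 = 1 from rfl, show Acf K 0 = 0 from rfl, show Bcf K 0 = 0 from rfl,
          map_one]
        ring
      · show ι K (Dch K 1) * _ = Acf K 1 * _ + Bcf K 1 * _ + _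
        rw [show Dch K 1 = X 1 from rfl, show Acf K 1 = X 0 from rfl,
          show Bcf K 1 = -(X 0 ^ 2) from rfl, iota_X1, sQuad]
        ring
    | succ k ih =>
      refine ⟨ih.2, ?_⟩
      rw [show Dch K (k + 2) = X 1 * Dch K (k + 1) - X 0 ^ 2 * Dch K k from by rw [Dch],
        map_sub, map_mul, map_mul, map_pow, iota_X0, iota_X1,
        show Acf K (k + 2) = X 1 * X 2 * Acf K (k + 1) - X 0 ^ 2 * X 2 ^ 2 * Acf K k
          + (-1 : MvPolynomial (Fin 4) K) ^ (k + 1) * X 0 ^ (k + 2) * X 3 ^ (k + 1) from by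
            rw [Acf],
        show Bcf K (k + 2) = X 1 * Bcf K (k + 1) - X 0 ^ 2 * Bcf K k from by rw [Bcf]]
      rw [sQuad] at ih ⊢
      linear_combination (X 1 * X 2 : MvPolynomial (Fin 4) K) * ih.2
        - (X 0 ^ 2 * X 2 ^ 2 : MvPolynomial (Fin 4) K) * ih.1
  exact fun k => (key k).1

/-! ### the dual array and the functional L -/

noncomputable def cf (l i j : ℕ) : MvPolynomial (Fin 2) K :=
  if 1 ≤ i ∧ 1 ≤ j ∧ i + j = l + 1 then
    (-1 : MvPolynomial (Fin 2) K) ^ (j - 1) * X 0 ^ (i - 1) * Dch K (j - 1)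
  else 0

set_option linter.unreachableTactic false in
set_option linter.unusedTactic false in
lemma keyC (l : ℕ) (hl : 2 ≤ l) (i j : ℕ) :
    Ideal.Quotient.mk (Ideal.span {Dch K l})
      (X 0 * cf K l (i + 2) j + X 1 * cf K l (i + 1) (j + 1) + X 0 * cf K l i (j + 2)) = 0 := by
  by_cases hs : i + j + 2 = l + 1
  · rcases Nat.eq_zero_or_pos j with hj | hj
    · subst hj
      obtain ⟨i', rfl⟩ : ∃ i', i = i' + 1 := ⟨i - 1, by omega⟩
      have c1 : cf K l (i' + 1 + 2) 0 = 0 := by rw [cf, if_neg (by omega)]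
      have c2 : cf K l (i' + 1 + 1) 1 = X 0 ^ (i' + 1) := by
        rw [cf, if_pos (by omega)]
        simp [Dch]
        try ring
      have c3 : cf K l (i' + 1) 2 = -(X 0 ^ i' * X 1) := by
        rw [cf, if_pos (by omega)]
        simp [Dch]
        try ring
      rw [c1, c2, c3]
      rw [show (X 0 * 0 + X 1 * X 0 ^ (i' + 1) + X 0 * -(X 0 ^ i' * X 1) :
        MvPolynomial (Fin 2) K) = 0 from by ring, map_zero]
    · obtain ⟨j', rfl⟩ : ∃ j', j = j' + 1 := ⟨j - 1, by omega⟩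
      rcases Nat.eq_zero_or_pos i with hi | hi
      · subst hi
        have c1 : cf K l (0 + 2) (j' + 1) = (-1 : MvPolynomial (Fin 2) K) ^ j' * X 0 * Dch K j' := by
          rw [cf, if_pos (by omega)]
          simp
        have c2 : cf K l (0 + 1) (j' + 1 + 1) = (-1 : MvPolynomial (Fin 2) K) ^ (j' + 1) * Dch K (j' + 1) := by
          rw [cf, if_pos (by omega)]
          simp
        have c3 : cf K l 0 (j' + 1 + 2) = 0 := by rw [cf, if_neg (by omega)]
        rw [c1, c2, c3]
        have hexpr : (X 0 * ((-1 : MvPolynomial (Fin 2) K) ^ j' * X 0 * Dch K j')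
            + X 1 * ((-1 : MvPolynomial (Fin 2) K) ^ (j' + 1) * Dch K (j' + 1)) + X 0 * 0)
            = (-1 : MvPolynomial (Fin 2) K) ^ (j' + 1) * Dch K (j' + 2) := by
          rw [show Dch K (j' + 2) = X 1 * Dch K (j' + 1) - X 0 ^ 2 * Dch K j' from by rw [Dch]]
          ring
        rw [hexpr, show j' + 2 = l from by omega]
        exact (Ideal.Quotient.eq_zero_iff_mem).mpr
          (Ideal.mul_mem_left _ _ (Ideal.subset_span rfl))
      · obtain ⟨i', rfl⟩ : ∃ i', i = i' + 1 := ⟨i - 1, by omega⟩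
        have c1 : cf K l (i' + 1 + 2) (j' + 1)
            = (-1 : MvPolynomial (Fin 2) K) ^ j' * X 0 ^ (i' + 2) * Dch K j' := by
          rw [cf, if_pos (by omega)]
          simp
        have c2 : cf K l (i' + 1 + 1) (j' + 1 + 1)
            = (-1 : MvPolynomial (Fin 2) K) ^ (j' + 1) * X 0 ^ (i' + 1) * Dch K (j' + 1) := by
          rw [cf, if_pos (by omega)]
          simp
        have c3 : cf K l (i' + 1) (j' + 1 + 2)
            = (-1 : MvPolynomial (Fin 2) K) ^ (j' + 2) * X 0 ^ i' * Dch K (j' + 2) := by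
          rw [cf, if_pos (by omega)]
          simp
        rw [c1, c2, c3]
        rw [show (X 0 * ((-1 : MvPolynomial (Fin 2) K) ^ j' * X 0 ^ (i' + 2) * Dch K j')
            + X 1 * ((-1 : MvPolynomial (Fin 2) K) ^ (j' + 1) * X 0 ^ (i' + 1) * Dch K (j' + 1))
            + X 0 * ((-1 : MvPolynomial (Fin 2) K) ^ (j' + 2) * X 0 ^ i' * Dch K (j' + 2)))
            = 0 from by
          rw [show Dch K (j' + 2) = X 1 * Dch K (j' + 1) - X 0 ^ 2 * Dch K j' from by rw [Dch]]
          ring, map_zero]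
  · have c1 : cf K l (i + 2) j = 0 := by rw [cf, if_neg (by omega)]
    have c2 : cf K l (i + 1) (j + 1) = 0 := by rw [cf, if_neg (by omega)]
    have c3 : cf K l i (j + 2) = 0 := by rw [cf, if_neg (by omega)]
    rw [c1, c2, c3]
    simp

noncomputable def Lf (l : ℕ) (f : MvPolynomial (Fin 4) K) :
    MvPolynomial (Fin 2) K ⧸ Ideal.span {Dch K l} :=
  (AddMonoidAlgebra.coeff f).sum fun μ c => Ideal.Quotient.mk (Ideal.span {Dch K l})
    (C c * X 0 ^ (μ 0) * X 1 ^ (μ 1) * cf K l (μ 2) (μ 3))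

lemma Lf_add (l : ℕ) (f g : MvPolynomial (Fin 4) K) :
    Lf K l (f + g) = Lf K l f + Lf K l g := by
  classical
  rw [Lf, Lf, Lf, AddMonoidAlgebra.coeff_add]
  exact Finsupp.sum_add_index (by simp) (by intros; simp [map_add, add_mul])

lemma Lf_monomial (l : ℕ) (μ : Fin 4 →₀ ℕ) (c : K) :
    Lf K l (monomial μ c) = Ideal.Quotient.mk (Ideal.span {Dch K l})
      (C c * X 0 ^ (μ 0) * X 1 ^ (μ 1) * cf K l (μ 2) (μ 3)) := by
  rw [Lf]
  exact sum_monomial_eq (by simp)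

lemma Lf_mul_xpow (l : ℕ) (g : MvPolynomial (Fin 4) K) :
    Lf K l (g * X 2 ^ (l + 1)) = 0 := by
  induction g using MvPolynomial.induction_on' with
  | monomial μ c =>
    rw [X_pow_eq_monomial, monomial_mul, Lf_monomial]
    have h2 : (((μ + Finsupp.single (2 : Fin 4) (l + 1)) : Fin 4 →₀ ℕ) 2) = μ 2 + (l + 1) := by
      simp [Finsupp.add_apply, Finsupp.single_apply]
    have h3 : (((μ + Finsupp.single (2 : Fin 4) (l + 1)) : Fin 4 →₀ ℕ) 3) = μ 3 := by
      simp [Finsupp.add_apply, Finsupp.single_apply]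
    rw [h2, h3, cf, if_neg (by omega)]
    simp
  | add p q hp hq =>
    rw [add_mul, Lf_add, hp, hq, add_zero]

lemma Lf_mul_ypow (l : ℕ) (g : MvPolynomial (Fin 4) K) :
    Lf K l (g * X 3 ^ (l + 1)) = 0 := by
  induction g using MvPolynomial.induction_on' with
  | monomial μ c =>
    rw [X_pow_eq_monomial, monomial_mul, Lf_monomial]
    have h2 : (((μ + Finsupp.single (3 : Fin 4) (l + 1)) : Fin 4 →₀ ℕ) 2) = μ 2 := by
      simp [Finsupp.add_apply, Finsupp.single_apply]
    have h3 : (((μ + Finsupp.single (3 : Fin 4) (l + 1)) : Fin 4 →₀ ℕ) 3) = μ 3 + (l + 1) := by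
      simp [Finsupp.add_apply, Finsupp.single_apply]
    rw [h2, h3, cf, if_neg (by omega)]
    simp
  | add p q hp hq =>
    rw [add_mul, Lf_add, hp, hq, add_zero]

lemma Lf_mul_sQuad (l : ℕ) (hl : 2 ≤ l) (g : MvPolynomial (Fin 4) K) :
    Lf K l (g * sQuad K) = 0 := by
  have e1 : (X 0 * X 2 ^ 2 : MvPolynomial (Fin 4) K)
      = monomial (Finsupp.single 0 1 + Finsupp.single 2 2) 1 := by
    rw [← pow_one (X 0 : MvPolynomial (Fin 4) K), X_pow_eq_monomial, X_pow_eq_monomial,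
      monomial_mul, one_mul]
  have e2 : (X 1 * X 2 * X 3 : MvPolynomial (Fin 4) K)
      = monomial (Finsupp.single 1 1 + Finsupp.single 2 1 + Finsupp.single 3 1) 1 := by
    rw [← pow_one (X 1 : MvPolynomial (Fin 4) K), ← pow_one (X 2 : MvPolynomial (Fin 4) K),
      ← pow_one (X 3 : MvPolynomial (Fin 4) K), X_pow_eq_monomial, X_pow_eq_monomial,
      X_pow_eq_monomial, monomial_mul, monomial_mul, one_mul, one_mul]
  have e3 : (X 0 * X 3 ^ 2 : MvPolynomial (Fin 4) K)
      = monomial (Finsupp.single 0 1 + Finsupp.single 3 2) 1 := by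
    rw [← pow_one (X 0 : MvPolynomial (Fin 4) K), X_pow_eq_monomial, X_pow_eq_monomial,
      monomial_mul, one_mul]
  induction g using MvPolynomial.induction_on' with
  | monomial μ c =>
    rw [sQuad, mul_add, mul_add, e1, e2, e3, monomial_mul, monomial_mul, monomial_mul,
      Lf_add, Lf_add, Lf_monomial, Lf_monomial, Lf_monomial]
    have A0 : ∀ i : Fin 4, ((μ + (Finsupp.single 0 1 + Finsupp.single 2 2) : Fin 4 →₀ ℕ)) i
        = μ i + ((Finsupp.single (0 : Fin 4) 1 + Finsupp.single 2 2 : Fin 4 →₀ ℕ)) i := by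
      intro i; simp
    have B0 : ∀ i : Fin 4,
        ((μ + (Finsupp.single 1 1 + Finsupp.single 2 1 + Finsupp.single 3 1) : Fin 4 →₀ ℕ)) i
        = μ i + ((Finsupp.single (1 : Fin 4) 1 + Finsupp.single 2 1 + Finsupp.single 3 1 :
            Fin 4 →₀ ℕ)) i := by
      intro i; simp
    have C0 : ∀ i : Fin 4, ((μ + (Finsupp.single 0 1 + Finsupp.single 3 2) : Fin 4 →₀ ℕ)) i
        = μ i + ((Finsupp.single (0 : Fin 4) 1 + Finsupp.single 3 2 : Fin 4 →₀ ℕ)) i := by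
      intro i; simp
    simp only [A0, B0, C0]
    simp only [Finsupp.add_apply, Finsupp.single_apply]
    simp only [show ((0:Fin 4) = 0) = True by simp, show ((2:Fin 4) = 0) = False by simp,
      show ((2:Fin 4) = 1) = False by simp, show ((0:Fin 4) = 2) = False by simp,
      show ((0:Fin 4) = 3) = False by simp, show ((2:Fin 4) = 3) = False by simp,
      show ((1:Fin 4) = 0) = False by simp, show ((3:Fin 4) = 0) = False by simp,
      show ((1:Fin 4) = 1) = True by simp, show ((3:Fin 4) = 1) = False by simp,
      show ((1:Fin 4) = 2) = False by simp, show ((3:Fin 4) = 2) = False by simp,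
      show ((1:Fin 4) = 3) = False by simp, show ((3:Fin 4) = 3) = True by simp,
      show ((2:Fin 4) = 2) = True by simp, show ((0:Fin 4) = 1) = False by simp,
      if_true, if_false, add_zero, zero_add, mul_one]
    rw [← map_add, ← map_add,
      show (C c * X 0 ^ (μ 0 + 1) * X 1 ^ (μ 1) * cf K l (μ 2 + 2) (μ 3)
        + C c * X 0 ^ (μ 0) * X 1 ^ (μ 1 + 1) * cf K l (μ 2 + 1) (μ 3 + 1)
        + C c * X 0 ^ (μ 0 + 1) * X 1 ^ (μ 1) * cf K l (μ 2) (μ 3 + 2)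
        : MvPolynomial (Fin 2) K)
        = (C c * X 0 ^ (μ 0) * X 1 ^ (μ 1))
          * (X 0 * cf K l (μ 2 + 2) (μ 3) + X 1 * cf K l (μ 2 + 1) (μ 3 + 1)
              + X 0 * cf K l (μ 2) (μ 3 + 2)) from by ring,
      map_mul, keyC K l hl, mul_zero]
  | add p q hp hq =>
    rw [add_mul, Lf_add, hp, hq, add_zero]

lemma R2mono (ν : Fin 2 →₀ ℕ) (c : K) :
    (monomial ν c : MvPolynomial (Fin 2) K) = C c * X 0 ^ (ν 0) * X 1 ^ (ν 1) := by
  have hν : ν = Finsupp.single 0 (ν 0) + Finsupp.single 1 (ν 1) := by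
    ext i
    fin_cases i <;> simp [Finsupp.single_apply]
  rw [hν]
  rw [show (monomial (Finsupp.single 0 (ν 0) + Finsupp.single 1 (ν 1)) c
      : MvPolynomial (Fin 2) K)
    = monomial (Finsupp.single 0 (ν 0)) c * monomial (Finsupp.single 1 (ν 1)) 1 from by
      rw [monomial_mul, mul_one],
    ← X_pow_eq_monomial]
  rw [show (monomial (Finsupp.single 0 (ν 0)) c : MvPolynomial (Fin 2) K)
    = C c * X 0 ^ (ν 0) from by rw [X_pow_eq_monomial, C_mul_monomial, mul_one]]
  simp [Finsupp.add_apply, Finsupp.single_apply]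

lemma Lf_val (l : ℕ) (hl : 2 ≤ l) (g : MvPolynomial (Fin 2) K) :
    Lf K l ((ι K g) * (X 0 * X 2 ^ l * X 3))
      = Ideal.Quotient.mk (Ideal.span {Dch K l}) (g * X 0 ^ l) := by
  rw [ι]
  obtain ⟨l', rfl⟩ : ∃ l', l = l' + 1 := ⟨l - 1, by omega⟩
  have eM : (X 0 * X 2 ^ (l' + 1) * X 3 : MvPolynomial (Fin 4) K)
      = monomial (Finsupp.single 0 1 + Finsupp.single 2 (l' + 1) + Finsupp.single 3 1) 1 := by
    rw [← pow_one (X 0 : MvPolynomial (Fin 4) K), ← pow_one (X 3 : MvPolynomial (Fin 4) K),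
      X_pow_eq_monomial, X_pow_eq_monomial, X_pow_eq_monomial,
      monomial_mul, monomial_mul, one_mul, one_mul]
  induction g using MvPolynomial.induction_on' with
  | monomial ν c =>
    rw [show ((rename (Fin.castLE (by norm_num))) : MvPolynomial (Fin 2) K →ₐ[K]
        MvPolynomial (Fin 4) K) (monomial ν c)
      = monomial (ν.mapDomain (Fin.castLE (by norm_num))) c from rename_monomial _ _ _,
      eM, monomial_mul, Lf_monomial]
    have hin : Function.Injective (Fin.castLE (by norm_num : 2 ≤ 4)) := Fin.castLE_injective _
    have m0 : ((Finsupp.mapDomain (Fin.castLE (by norm_num : 2 ≤ 4)) ν : Fin 4 →₀ ℕ)) 0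
        = ν 0 := by
      rw [show (0 : Fin 4) = Fin.castLE (by norm_num : 2 ≤ 4) 0 from rfl,
        Finsupp.mapDomain_apply hin]
    have m1 : ((Finsupp.mapDomain (Fin.castLE (by norm_num : 2 ≤ 4)) ν : Fin 4 →₀ ℕ)) 1
        = ν 1 := by
      rw [show (1 : Fin 4) = Fin.castLE (by norm_num : 2 ≤ 4) 1 from rfl,
        Finsupp.mapDomain_apply hin]
    have m2 : ((Finsupp.mapDomain (Fin.castLE (by norm_num : 2 ≤ 4)) ν : Fin 4 →₀ ℕ)) 2
        = 0 := by
      apply Finsupp.mapDomain_notin_range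
      rintro ⟨w, hw⟩
      fin_cases w <;> exact absurd hw (by decide)
    have m3 : ((Finsupp.mapDomain (Fin.castLE (by norm_num : 2 ≤ 4)) ν : Fin 4 →₀ ℕ)) 3
        = 0 := by
      apply Finsupp.mapDomain_notin_range
      rintro ⟨w, hw⟩
      fin_cases w <;> exact absurd hw (by decide)
    have k1 : ∀ (E : Fin 4 →₀ ℕ) (i : Fin 4),
        ((Finsupp.mapDomain (Fin.castLE (by norm_num : 2 ≤ 4)) ν + E : Fin 4 →₀ ℕ)) i
          = (Finsupp.mapDomain (Fin.castLE (by norm_num : 2 ≤ 4)) ν : Fin 4 →₀ ℕ) i + E i := by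
      intros; simp
    simp only [k1, m0, m1, m2, m3]
    simp only [Finsupp.add_apply, Finsupp.single_apply]
    simp only [show ((0:Fin 4) = 0) = True by simp, show ((2:Fin 4) = 0) = False by simp,
      show ((2:Fin 4) = 1) = False by simp, show ((0:Fin 4) = 2) = False by simp,
      show ((0:Fin 4) = 3) = False by simp, show ((2:Fin 4) = 3) = False by simp,
      show ((3:Fin 4) = 0) = False by simp, show ((3:Fin 4) = 1) = False by simp,
      show ((3:Fin 4) = 2) = False by simp, show ((3:Fin 4) = 3) = True by simp,
      show ((2:Fin 4) = 2) = True by simp, show ((0:Fin 4) = 1) = False by simp,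
      if_true, if_false, add_zero, zero_add, mul_one]
    rw [show cf K (l' + 1) (l' + 1) 1 = X 0 ^ l' from by
      rw [cf, if_pos (by omega)]; simp [Dch]]
    rw [R2mono]
    exact congrArg _ (by ring)
  | add p q hp hq =>
    rw [map_add, add_mul, Lf_add, hp, hq, add_mul, map_add]

/-! ### decomposition -/

lemma dec (r : MvPolynomial (Fin 4) K) :
    ∃ b c : MvPolynomial (Fin 4) K, r = ι K (ev K r) + b * X 2 + c * X 3 := by
  induction r using MvPolynomial.induction_on with
  | C a =>
    refine ⟨0, 0, ?_⟩
    rw [show ev K (C a) = C a from by simp [ev], show ι K (C a) = C a from by simp [ι]]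
    ring
  | add p q hp hq =>
    obtain ⟨bp, cp, hbp⟩ := hp
    obtain ⟨bq, cq, hbq⟩ := hq
    refine ⟨bp + bq, cp + cq, ?_⟩
    rw [map_add, map_add]
    linear_combination hbp + hbq
  | mul_X p i hp =>
    obtain ⟨b, c, hb⟩ := hp
    fin_cases i
    · refine ⟨b * X 0, c * X 0, ?_⟩
      show p * X 0 = ι K (ev K (p * X 0)) + b * X 0 * X 2 + c * X 0 * X 3
      rw [show ev K (p * X 0) = ev K p * X 0 from by rw [map_mul]; congr 1; simp [ev],
        map_mul, iota_X0]
      linear_combination (X 0 : MvPolynomial (Fin 4) K) * hb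
    · refine ⟨b * X 1, c * X 1, ?_⟩
      show p * X 1 = ι K (ev K (p * X 1)) + b * X 1 * X 2 + c * X 1 * X 3
      rw [show ev K (p * X 1) = ev K p * X 1 from by rw [map_mul]; congr 1; simp [ev],
        map_mul, iota_X1]
      linear_combination (X 1 : MvPolynomial (Fin 4) K) * hb
    · refine ⟨p, 0, ?_⟩
      show p * X 2 = ι K (ev K (p * X 2)) + p * X 2 + 0 * X 3
      rw [show ev K (p * X 2) = 0 from by rw [map_mul, show ev K (X 2) = 0 from by simp [ev],
        mul_zero], map_zero]
      ring
    · refine ⟨0, p, ?_⟩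
      show p * X 3 = ι K (ev K (p * X 3)) + 0 * X 2 + p * X 3
      rw [show ev K (p * X 3) = 0 from by rw [map_mul, show ev K (X 3) = 0 from by simp [ev],
        mul_zero], map_zero]
      ring

end Stmt14

namespace Stmt14

variable (K : Type) [Field K]

/-! ### the candidate associated primes -/

noncomputable def psi (p' : MvPolynomial (Fin 2) K) :
    MvPolynomial (Fin 4) K →+* MvPolynomial (Fin 2) K ⧸ Ideal.span {p'} :=
  (Ideal.Quotient.mk (Ideal.span {p'})).comp (ev K).toRingHom

lemma psi_sQuad (p' : MvPolynomial (Fin 2) K) : psi K p' (sQuad K) = 0 := by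
  rw [psi]
  simp [ev_sQuad]

noncomputable def psibar (p' : MvPolynomial (Fin 2) K) :
    Aring K →+* MvPolynomial (Fin 2) K ⧸ Ideal.span {p'} :=
  Ideal.Quotient.lift (Ideal.span {sQuad K}) (psi K p') (by
    intro a ha
    rw [Ideal.mem_span_singleton] at ha
    obtain ⟨c, rfl⟩ := ha
    rw [map_mul, psi_sQuad, zero_mul])

lemma psibar_mk (p' : MvPolynomial (Fin 2) K) (r : MvPolynomial (Fin 4) K) :
    psibar K p' (π K r) = Ideal.Quotient.mk (Ideal.span {p'}) (ev K r) :=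
  Ideal.Quotient.lift_mk _ _ _

noncomputable def Pid (p' : MvPolynomial (Fin 2) K) : Ideal (Aring K) :=
  RingHom.ker (psibar K p')

lemma Pid_isPrime (p' : MvPolynomial (Fin 2) K) (hp : Prime p') : (Pid K p').IsPrime := by
  haveI h1 : (Ideal.span {p'}).IsPrime := (Ideal.span_singleton_prime hp.ne_zero).mpr hp
  haveI : IsDomain (MvPolynomial (Fin 2) K ⧸ Ideal.span {p'}) :=
    (Ideal.Quotient.isDomain_iff_prime _).mpr h1
  exact RingHom.ker_isPrime _

theorem pid_mem (l : ℕ) (hl : 2 ≤ l) (p' k : MvPolynomial (Fin 2) K)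
    (hp : Prime p') (hk : Dch K l = p' * k) :
    Pid K p' ∈ associatedPrimes (Aring K)
      (Aring K ⧸ Ideal.span {π K (X 2 ^ (l + 1)), π K (X 3 ^ (l + 1))}) := by
  classical
  set J : Ideal (Aring K) := Ideal.span {π K (X 2 ^ (l + 1)), π K (X 3 ^ (l + 1))} with hJdef
  set I2 : Ideal (MvPolynomial (Fin 4) K) :=
    Ideal.span {X 2 ^ (l + 1), X 3 ^ (l + 1)} with hI2
  set I4 : Ideal (MvPolynomial (Fin 4) K) := I2 ⊔ Ideal.span {sQuad K} with hI4
  have hx : ∀ g : MvPolynomial (Fin 4) K, g * X 2 ^ (l + 1) ∈ I4 := fun g =>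
    Submodule.mem_sup_left (Ideal.mul_mem_left _ g (Ideal.subset_span (by simp)))
  have hy : ∀ g : MvPolynomial (Fin 4) K, g * X 3 ^ (l + 1) ∈ I4 := fun g =>
    Submodule.mem_sup_left (Ideal.mul_mem_left _ g (Ideal.subset_span (by simp)))
  have hq : ∀ g : MvPolynomial (Fin 4) K, g * sQuad K ∈ I4 := fun g =>
    Submodule.mem_sup_right (Ideal.mul_mem_left _ g (Ideal.subset_span rfl))
  have hmemiff : ∀ w : MvPolynomial (Fin 4) K,
      (Ideal.Quotient.mk J (π K w) = 0 ↔ w ∈ I4) := by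
    intro w
    rw [Ideal.Quotient.eq_zero_iff_mem]
    have hJ : J = Ideal.map (π K) I2 := by
      rw [hJdef, hI2, Ideal.map_span]
      congr 1
      simp [Set.image_insert_eq]
    rw [hJ, hI4]
    exact Ideal.mem_quotient_iff_mem_sup
  have hLzero : ∀ w ∈ I4, Lf K l w = 0 := by
    intro w hw
    rw [hI4] at hw
    obtain ⟨w1, hw1, w2, hw2, rfl⟩ := Submodule.mem_sup.mp hw
    obtain ⟨g1, g2, hg⟩ := Ideal.mem_span_pair.mp hw1
    obtain ⟨g3, hg3⟩ := Ideal.mem_span_singleton.mp hw2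
    rw [Lf_add, ← hg, hg3, mul_comm (sQuad K) g3, Lf_add, Lf_mul_xpow, Lf_mul_ypow,
      Lf_mul_sQuad K l hl]
    simp
  refine ⟨Pid_isPrime K p' hp,
    Ideal.Quotient.mk J (π K (ι K k * (X 0 * X 2 ^ l * X 3))), ?_⟩
  rw [← (Pid_isPrime K p' hp).radical]
  congr 1
  ext a
  obtain ⟨r, rfl⟩ := Ideal.Quotient.mk_surjective a
  rw [Submodule.mem_colon_singleton, Submodule.mem_bot]
  have hsmul : (Ideal.Quotient.mk (Ideal.span {sQuad K}) r : Aring K)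
        • (Ideal.Quotient.mk J (π K (ι K k * (X 0 * X 2 ^ l * X 3))))
      = Ideal.Quotient.mk J (π K (r * (ι K k * (X 0 * X 2 ^ l * X 3)))) := by
    rw [map_mul (π K), ← Ideal.Quotient.mk_eq_mk, ← Ideal.Quotient.mk_eq_mk,
      ← Submodule.Quotient.mk_smul]
    congr 1
  rw [hsmul, hmemiff]
  constructor
  · intro ha
    have h0 : p' ∣ ev K r := by
      have h1 : psibar K p' (π K r) = 0 := RingHom.mem_ker.mp ha
      rw [psibar_mk] at h1
      exact Ideal.mem_span_singleton.mp (Ideal.Quotient.eq_zero_iff_mem.mp h1)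
    obtain ⟨c2, hc2⟩ := h0
    obtain ⟨b, c, hbc⟩ := dec K r
    have hsplit : r * (ι K k * (X 0 * X 2 ^ l * X 3))
        = ι K (ev K r) * (ι K k * (X 0 * X 2 ^ l * X 3))
          + (b * (ι K k * (X 0 * X 3))) * X 2 ^ (l + 1)
          + (c * (ι K k * X 2 ^ l)) * sQuad K
          - (c * (ι K k * (X 0 * X 2 + X 1 * X 3))) * X 2 ^ (l + 1) := by
      conv_lhs => rw [hbc]
      rw [sQuad]; ring
    rw [hsplit]
    refine Submodule.sub_mem _
      (Submodule.add_mem _ (Submodule.add_mem _ ?_ (hx _)) (hq _)) (hx _)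
    have hIo : ι K (ev K r) * (ι K k * (X 0 * X 2 ^ l * X 3))
        = ι K c2 * (ι K (Dch K l) * (X 0 * X 2 ^ l * X 3)) := by
      rw [hc2, hk, map_mul, map_mul]; ring
    rw [hIo, ID1 K l]
    rw [show ι K c2 * (Acf K l * sQuad K + Bcf K l * X 2 ^ (l + 1)
        + (-1 : MvPolynomial (Fin 4) K) ^ l * X 0 ^ (l + 1) * X 3 ^ (l + 1))
      = (ι K c2 * Acf K l) * sQuad K + (ι K c2 * Bcf K l) * X 2 ^ (l + 1)
        + (ι K c2 * ((-1 : MvPolynomial (Fin 4) K) ^ l * X 0 ^ (l + 1))) * X 3 ^ (l + 1) from by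
      ring]
    exact Submodule.add_mem _ (Submodule.add_mem _ (hq _) (hx _)) (hy _)
  · intro hmem
    obtain ⟨b, c, hbc⟩ := dec K r
    have h3mem : X 3 * (ι K k * (X 0 * X 2 ^ l * X 3)) ∈ I4 := by
      rw [show X 3 * (ι K k * (X 0 * X 2 ^ l * X 3))
          = (ι K k * X 2 ^ l) * sQuad K
            - (ι K k * (X 0 * X 2 + X 1 * X 3)) * X 2 ^ (l + 1) from by
        rw [sQuad]; ring]
      exact Submodule.sub_mem _ (hq _) (hx _)
    have hIom : ι K (ev K r) * (ι K k * (X 0 * X 2 ^ l * X 3)) ∈ I4 := by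
      have heq : ι K (ev K r) * (ι K k * (X 0 * X 2 ^ l * X 3))
          = r * (ι K k * (X 0 * X 2 ^ l * X 3))
            - (b * (ι K k * (X 0 * X 3))) * X 2 ^ (l + 1)
            - c * (X 3 * (ι K k * (X 0 * X 2 ^ l * X 3))) := by
        conv_rhs => rw [hbc]
        ring
      rw [heq]
      exact Submodule.sub_mem _ (Submodule.sub_mem _ hmem (hx _))
        (Ideal.mul_mem_left _ c h3mem)
    have hLf0 : Lf K l (ι K (ev K r * k) * (X 0 * X 2 ^ l * X 3)) = 0 := by
      rw [map_mul]
      rw [show ι K (ev K r) * ι K k * (X 0 * X 2 ^ l * X 3)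
          = ι K (ev K r) * (ι K k * (X 0 * X 2 ^ l * X 3)) from by ring]
      exact hLzero _ hIom
    rw [Lf_val K l hl] at hLf0
    have hdvd : Dch K l ∣ (ev K r * k) * X 0 ^ l :=
      Ideal.mem_span_singleton.mp (Ideal.Quotient.eq_zero_iff_mem.mp hLf0)
    obtain ⟨w0, hw0⟩ := hdvd
    have hkne : k ≠ 0 := by
      intro h0
      rw [h0, mul_zero] at hk
      exact Dch_ne_zero K l hk
    have hcan : ev K r * X 0 ^ l = p' * w0 := by
      apply mul_right_cancel₀ hkne
      linear_combination hw0 + w0 * hk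
    have hpr : p' ∣ ev K r := by
      rcases hp.dvd_mul.mp ⟨w0, hcan⟩ with h | h
      · exact h
      · exfalso
        have h5 : p' ∣ X 0 := hp.dvd_of_dvd_pow h
        have h6 : Associated p' (X 0) := hp.associated_of_dvd (prime_X_fin K 0) h5
        exact X0_not_dvd_Dch K l (h6.symm.dvd.trans ⟨k, hk⟩)
    show Ideal.Quotient.mk (Ideal.span {sQuad K}) r ∈ RingHom.ker (psibar K p')
    rw [RingHom.mem_ker, show (Ideal.Quotient.mk (Ideal.span {sQuad K}) r : Aring K)
      = π K r from rfl, psibar_mk]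
    exact Ideal.Quotient.eq_zero_iff_mem.mpr (Ideal.mem_span_singleton.mpr hpr)

end Stmt14

/-- `A = K[s,t,x,y]/(sx²+txy+sy²)` is an integral domain and
`⋃_{n ≥ 1} Ass_A A/(xⁿ,yⁿ)` is infinite. -/
theorem stmt_14 (K : Type) [Field K] :
    IsDomain (Aring K) ∧
      (⋃ n ∈ {n : ℕ | 0 < n},
        associatedPrimes (Aring K)
          (Aring K ⧸ Ideal.span {π K (X 2 ^ n), π K (X 3 ^ n)})).Infinite := by
  constructor
  · exact (Ideal.Quotient.isDomain_iff_prime _).mpr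
      ((Ideal.span_singleton_prime (Stmt14.prime_sQuad K).ne_zero).mpr (Stmt14.prime_sQuad K))
  · have hinf : {q : ℕ | Nat.Prime q ∧ 2 < q}.Infinite := by
      have h2 : ({q : ℕ | Nat.Prime q} \ {q : ℕ | q ≤ 2}).Infinite :=
        Nat.infinite_setOf_prime.diff (Set.finite_le_nat 2)
      apply h2.mono
      intro q hq
      exact ⟨hq.1, by simpa using hq.2⟩
    haveI := hinf.to_subtype
    have hfac : ∀ q : {q : ℕ | Nat.Prime q ∧ 2 < q},
        ∃ P k : MvPolynomial (Fin 2) K, Prime P ∧ Stmt14.Dch K (q.1 - 1) = P * k := by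
      intro q
      have hq3 : 2 < q.1 := q.2.2
      have h1 : ¬IsUnit (Stmt14.Dch K (q.1 - 1)) :=
        Stmt14.Dch_not_unit K (by omega)
      obtain ⟨P, hPirr, hPdvd⟩ :=
        WfDvdMonoid.exists_irreducible_factor h1 (Stmt14.Dch_ne_zero K _)
      obtain ⟨k, hk⟩ := hPdvd
      exact ⟨P, k, UniqueFactorizationMonoid.irreducible_iff_prime.mp hPirr, hk⟩
    choose P kk hP hk using hfac
    apply Set.infinite_of_injective_forall_mem (f := fun q => Stmt14.Pid K (P q))
    · intro q1 q2 heq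
      by_contra hne
      have hne' : q1.1 ≠ q2.1 := fun h => hne (Subtype.ext h)
      have hm : π K (Stmt14.ι K (P q2)) ∈ Stmt14.Pid K (P q2) := by
        rw [Stmt14.Pid, RingHom.mem_ker, Stmt14.psibar_mk, Stmt14.ev_iota]
        exact Ideal.Quotient.eq_zero_iff_mem.mpr (Ideal.subset_span rfl)
      have heq' : Stmt14.Pid K (P q1) = Stmt14.Pid K (P q2) := heq
      rw [← heq'] at hm
      have hdvd : P q1 ∣ P q2 := by
        have h1 := RingHom.mem_ker.mp hm
        rw [Stmt14.psibar_mk, Stmt14.ev_iota] at h1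
        exact Ideal.mem_span_singleton.mp (Ideal.Quotient.eq_zero_iff_mem.mp h1)
      have hd2 : P q1 ∣ Stmt14.Dch K (q2.1 - 1) := hdvd.trans ⟨kk q2, hk q2⟩
      have hd1 : P q1 ∣ Stmt14.Dch K (q1.1 - 1) := ⟨kk q1, hk q1⟩
      have hfin := Stmt14.Dch_gcd K (hP q1) (q1.1 + q2.1) (q1.1 - 1) (q2.1 - 1)
        (by omega) hd1 hd2
      have hq13 : 2 < q1.1 := q1.2.2
      have hq23 : 2 < q2.1 := q2.2.2
      have hco : Nat.gcd q1.1 q2.1 = 1 := (Nat.coprime_primes q1.2.1 q2.2.1).mpr hne'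
      rw [show q1.1 - 1 + 1 = q1.1 from by omega, show q2.1 - 1 + 1 = q2.1 from by omega,
        hco] at hfin
      exact (hP q1).not_unit (isUnit_of_dvd_one (by simpa [Stmt14.Dch] using hfin))
    · intro q
      rw [Set.mem_iUnion₂]
      have hq3 : 2 < q.1 := q.2.2
      refine ⟨q.1, q.2.1.pos, ?_⟩
      have hmem := Stmt14.pid_mem K (q.1 - 1) (by omega) (P q) (kk q) (hP q) (hk q)
      rw [show q.1 - 1 + 1 = q.1 from by omega] at hmem
      exact hmem
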